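/- Let g be an interspersion and M an infinite set of natural numbers with increasing enumeration m₀ < m₁ < m₂ < .... Then the relabeling of g|M, obtained by restricting g to M and replacing each occurrence of mᵢ by i, is again an interspersion. -/

import Mathlib

open Classical

noncomputable section

/-- The minimal excludant of a set of naturals. -/
def mex (S : Set ℕ) : ℕ := sInf {v | v ∉ S}

/-- A rule sequence is regular if `f 0 = 0`, `f n ≤ n`, and `f` increases by 0 or 1. -/
def Regular (f : ℕ → ℕ) : Prop :=
  f 0 = 0 ∧ (∀ n, f n ≤ n) ∧ ∀ n, f n ≤ f (n + 1) ∧ f (n + 1) ≤ f n + 1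

/-- `g` is the Grundy sequence for Maximum Nim with rule `f`:
`g n = mex { g (n - i) : 1 ≤ i ≤ f n }`. -/
def MaxNimGrundy (f g : ℕ → ℕ) : Prop :=
  ∀ n, g n = mex {v | ∃ i, 1 ≤ i ∧ i ≤ f n ∧ g (n - i) = v}

/-- `h` is the Grundy sequence for Minimum Nim with rule `f`:
`h n = mex { h i : 0 ≤ i ≤ n - f n - 1 }`. -/
def MinNimGrundy (f h : ℕ → ℕ) : Prop :=
  ∀ n, h n = mex {v | ∃ i, i + f n + 1 ≤ n ∧ h i = v}

/-- Every natural number occurs infinitely often. -/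
def Infinitive (g : ℕ → ℕ) : Prop := ∀ k, {n | g n = k}.Infinite

/-- The position of the first occurrence of `k` in `g`. -/
def firstOcc (g : ℕ → ℕ) (k : ℕ) : ℕ := sInf {n | g n = k}

/-- `n` is not the first occurrence of its value in `g`. -/
def NotFirst (g : ℕ → ℕ) (n : ℕ) : Prop := ∃ m < n, g m = g n

/-- The subsequence of `g` obtained by deleting the first occurrence of each value. -/
def Lam (g : ℕ → ℕ) : ℕ → ℕ := fun m => g (Nat.nth (NotFirst g) m)

/-- Kimberling's fractal sequences: infinitive, first occurrences in increasing
order of value (F2), and deleting first occurrences leaves the sequence unchanged (F3). -/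
def Fractal (g : ℕ → ℕ) : Prop :=
  Infinitive g ∧
  (∀ j k, j < k → firstOcc g j < firstOcc g k) ∧
  (∀ m, Lam g m = g m)

/-- The restriction `g|M`: the subsequence of terms of `g` lying in `M`. -/
def restrictSeq (g : ℕ → ℕ) (M : Set ℕ) : ℕ → ℕ :=
  fun m => g (Nat.nth (fun n => g n ∈ M) m)

/-- An interspersion: an infinitive sequence such that for `i < j` the restriction
`g|{i,j}` is an initial block of `i`'s followed by strict alternation `j, i, j, i, ...`. -/
def Interspersion (g : ℕ → ℕ) : Prop :=
  Infinitive g ∧ ∀ i j, i < j → ∃ N,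
    (∀ n < N, restrictSeq g {i, j} n = i) ∧
    ∀ n, restrictSeq g {i, j} (N + 2 * n) = j ∧
         restrictSeq g {i, j} (N + 2 * n + 1) = i

/-- `striangle g i j`: the number of occurrences of `i` strictly before the first
occurrence of `j`, not counting the occurrence `g 0 = 0` when `i = 0`. -/
def striangle (g : ℕ → ℕ) (i j : ℕ) : ℕ :=
  Set.ncard {n | g n = i ∧ n < firstOcc g j ∧ (i = 0 → n ≠ 0)}

/-- A subadditive triangle: `s i j + s j k - 1 ≤ s i k ≤ s i j + s j k` for `i < j < k`. -/
def SubadditiveTriangle (s : ℕ → ℕ → ℕ) : Prop :=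
  ∀ i j k, i < j → j < k →
    s i j + s j k ≤ s i k + 1 ∧ s i k ≤ s i j + s j k

/-- the relabeling of the restriction of an interspersion to an
infinite set `M` (replacing the `i`-th smallest element of `M` by `i`) is again
an interspersion. -/
lemma nth_nth_comp (P Q : ℕ → Prop) (hPinf : (setOf P).Infinite)
    (hQinf : (setOf Q).Infinite) (hQP : ∀ n, Q n → P n) (n : ℕ) :
    Nat.nth P (Nat.nth (fun m => Q (Nat.nth P m)) n) = Nat.nth Q n := by
  set S : ℕ → Prop := fun m => Q (Nat.nth P m) with hS
  have hsub : setOf Q ⊆ Set.range (Nat.nth P) := by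
    rw [Nat.range_nth_of_infinite hPinf]; exact fun x hx => hQP x hx
  have hSinf : (setOf S).Infinite := hQinf.preimage hsub
  have hmono : StrictMono (Nat.nth P ∘ Nat.nth S) :=
    (Nat.nth_strictMono hPinf).comp (Nat.nth_strictMono hSinf)
  have hrange : Set.range (Nat.nth P ∘ Nat.nth S) = setOf Q := by
    ext q
    constructor
    · rintro ⟨k, rfl⟩
      exact Nat.nth_mem_of_infinite hSinf k
    · intro hq
      obtain ⟨m, hm⟩ := hsub hq
      have hSm : S m := by rw [hS]; simp only [hm]; exact hq
      have : m ∈ Set.range (Nat.nth S) := by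
        rw [Nat.range_nth_of_infinite hSinf]; exact hSm
      obtain ⟨k, hk⟩ := this
      exact ⟨k, by simp [Function.comp, hk, hm]⟩
  have heq : (Nat.nth P ∘ Nat.nth S) = Nat.nth Q := by
    rw [← (hmono.range_inj (Nat.nth_strictMono hQinf))]
    rw [hrange, Nat.range_nth_of_infinite hQinf]; rfl
  exact congrFun heq n

theorem interspersion_restrict_relabel (g : ℕ → ℕ) (hg : Interspersion g)
    (M : Set ℕ) (hM : M.Infinite) (r : ℕ → ℕ)
    (hr : ∀ m, Nat.nth (· ∈ M) (r m) = restrictSeq g M m) :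
    Interspersion r := by
  obtain ⟨hginf, hgalt⟩ := hg
  have hMinf : (setOf (· ∈ M)).Infinite := hM
  have hMmem : ∀ k, Nat.nth (· ∈ M) k ∈ M := fun k => Nat.nth_mem_of_infinite hMinf k
  have hMinj : Function.Injective (Nat.nth (· ∈ M)) := Nat.nth_injective hMinf
  set P : ℕ → Prop := fun n => g n ∈ M with hPdef
  have hPinf : (setOf P).Infinite := by
    obtain ⟨m, hm⟩ := hM.nonempty
    exact (hginf m).mono (fun n hn => by
      simp only [Set.mem_setOf_eq] at hn ⊢; show g n ∈ M; rw [hn]; exact hm)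
  -- key: r m = k ↔ g (nth P m) = nth M k
  have key : ∀ m k, r m = k ↔ g (Nat.nth P m) = Nat.nth (· ∈ M) k := by
    intro m k
    constructor
    · rintro rfl
      exact (hr m).symm
    · intro h
      apply hMinj
      rw [hr m]; exact h
  constructor
  · -- infinitive
    intro k
    have : {n | r n = k} = (Nat.nth P) ⁻¹' {n | g n = Nat.nth (· ∈ M) k} := by
      ext n; simp only [Set.mem_setOf_eq, Set.mem_preimage]; exact key n k
    rw [this]
    apply Set.Infinite.preimage (hginf _)
    rw [Nat.range_nth_of_infinite hPinf]
    intro x hx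
    simp only [Set.mem_setOf_eq] at hx ⊢
    show g x ∈ M; rw [hx]; exact hMmem k
  · intro i j hij
    set a := Nat.nth (· ∈ M) i with ha
    set b := Nat.nth (· ∈ M) j with hb
    have hab : a < b := (Nat.nth_strictMono hMinf) hij
    obtain ⟨N, hN1, hN2⟩ := hgalt a b hab
    set Q : ℕ → Prop := fun n => g n ∈ ({a, b} : Set ℕ) with hQdef
    have hQinf : (setOf Q).Infinite := by
      refine (hginf a).mono (fun n hn => ?_)
      simp only [Set.mem_setOf_eq] at hn ⊢
      show g n ∈ ({a, b} : Set ℕ); rw [hn]; exact Set.mem_insert _ _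
    have hQP : ∀ n, Q n → P n := by
      intro n hn
      simp only [hQdef, Set.mem_insert_iff, Set.mem_singleton_iff, Set.mem_setOf_eq] at hn
      rcases hn with h | h <;> simp only [hPdef] <;> rw [h] <;> [exact hMmem i; exact hMmem j]
    -- the restriction predicates agree
    have hRQ : (fun m => r m ∈ ({i, j} : Set ℕ)) = fun m => Q (Nat.nth P m) := by
      funext m
      simp only [Set.mem_insert_iff, Set.mem_singleton_iff, hQdef, eq_iff_iff]
      rw [key m i, key m j]
    have hval : ∀ n, Nat.nth (· ∈ M) (restrictSeq r {i, j} n) = restrictSeq g {a, b} n := by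
      intro n
      show Nat.nth (· ∈ M) (r (Nat.nth (fun m => r m ∈ ({i,j}:Set ℕ)) n)) = _
      rw [hr, hRQ]
      show g (Nat.nth P (Nat.nth (fun m => Q (Nat.nth P m)) n)) = g (Nat.nth Q n)
      rw [nth_nth_comp P Q hPinf hQinf hQP n]
    refine ⟨N, fun n hn => ?_, fun n => ⟨?_, ?_⟩⟩
    · apply hMinj
      rw [hval n, hN1 n hn]
    · apply hMinj
      rw [hval _, (hN2 n).1]
    · apply hMinj
      rw [hval _, (hN2 n).2]
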